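/- Along the positive branch of ς³ + (1 - k·q)·ς² = σ, one has ς̄¹(q, σ) → -∞ as q → +∞, where ς̄¹(q, σ) = ς¹(q, σ) - q/3. -/

import Mathlib

theorem stmt_14 (k σ : ℝ) (hk : 0 < k) (hk' : k < 1/3) (hσ : 0 < σ)
    (ς₁ : ℝ → ℝ)
    (hpos : ∀ q, 0 < ς₁ q)
    (hroot : ∀ q, (ς₁ q)^3 + (1 - k*q)*(ς₁ q)^2 - σ = 0) :
    Filter.Tendsto (fun q => ς₁ q - q/3) Filter.atTop Filter.atBot := by
  have hb : Filter.Tendsto (fun q : ℝ => (k - 1/3) * q + (σ - 1)) Filter.atTop Filter.atBot := by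
    apply Filter.tendsto_atBot_add_const_right
    exact Filter.Tendsto.const_mul_atTop_of_neg (by linarith) Filter.tendsto_id
  refine Filter.tendsto_atBot_mono' _ ?_ hb
  filter_upwards [Filter.eventually_ge_atTop (2 / k)] with q hq
  have hkq : 2 ≤ k * q := by
    rw [div_le_iff₀ hk] at hq
    linarith
  have hs := hpos q
  have hr := hroot q
  have h2 : k * q - 1 ≤ ς₁ q := by nlinarith [mul_pos hs hs]
  have h3 : ς₁ q ≤ k * q - 1 + σ := by nlinarith [mul_pos hs hs, sq_nonneg (ς₁ q - 1)]
  linarith
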